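/- Let g₁, g₂, g₃ be hyperbolic isometries of a simplicial tree such that no two of the axes γ₁, γ₂, γ₃ intersect, and suppose the distance along γ₃ between Proj_{γ₃}(γ₁) and Proj_{γ₃}(γ₂) is at least l(g₃), with g₃ translating the projection of γ₁ towards the projection of γ₂. Then l(g₃g₁g₃⁻¹ · g₂) ≤ l(g₁g₂) − 2l(g₃) and l(g₃g₁g₃⁻¹ · g₂⁻¹) ≤ l(g₁g₂⁻¹) − 2l(g₃). -/
import Mathlib


open SimpleGraph

variable {V : Type*}

/-- Translation length of a graph automorphism of `G` (min displacement over vertices). -/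
noncomputable def ell (G : SimpleGraph V) (g : G ≃g G) : ℕ :=
  sInf (Set.range fun x => G.dist x (g x))

/-- The set of vertices realizing the minimal displacement (the axis, for hyperbolic `g`). -/
def axisSet (G : SimpleGraph V) (g : G ≃g G) : Set V :=
  {x | G.dist x (g x) = ell G g}

/-- `g` acts without inversions: no edge is flipped. -/
def noInv (G : SimpleGraph V) (g : G ≃g G) : Prop :=
  ∀ x y, G.Adj x y → ¬(g x = y ∧ g y = x)

/-- The segment (geodesic) between `p` and `q` in the tree. -/
def seg (G : SimpleGraph V) (p q : V) : Set V :=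
  {x | G.dist p x + G.dist x q = G.dist p q}

/-- The open segment between `p` and `q` (endpoints removed). -/
def openSeg (G : SimpleGraph V) (p q : V) : Set V :=
  {x | x ∈ seg G p q ∧ x ≠ p ∧ x ≠ q}

/-- Distance from a vertex to a set of vertices. -/
noncomputable def distToSet (G : SimpleGraph V) (x : V) (S : Set V) : ℕ :=
  sInf (G.dist x '' S)

/-- Distance between two sets of vertices. -/
noncomputable def setDist (G : SimpleGraph V) (S T : Set V) : ℕ :=
  sInf (Set.image2 G.dist S T)

/-- The projection of `B` onto `A`: points of `A` at minimal distance from `B`. -/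
noncomputable def projOn (G : SimpleGraph V) (A B : Set V) : Set V :=
  {x | x ∈ A ∧ distToSet G x B = setDist G A B}

/-- `g` translates the vertex `p` (assumed on its axis) towards the vertex `q`. -/
noncomputable def translatesToward (G : SimpleGraph V) (g : G ≃g G) (p q : V) : Prop :=
  (G.dist (g p) q : ℤ) = |(G.dist p q : ℤ) - (ell G g : ℤ)|


/-! ### Auxiliary tree-geometry machinery -/

variable {G : SimpleGraph V}

/-- `c₀` is the gate (nearest-point projection) of `x` in the set `C`. -/
def IsGate (G : SimpleGraph V) (x c₀ : V) (C : Set V) : Prop :=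
  c₀ ∈ C ∧ ∀ c ∈ C, G.dist x c = G.dist x c₀ + G.dist c₀ c

/-- A set is convex: it contains geodesic segments between its points. -/
def SegClosed (G : SimpleGraph V) (C : Set V) : Prop :=
  ∀ x ∈ C, ∀ y ∈ C, ∀ m ∈ seg G x y, m ∈ C

lemma iso_dist_le (hc : G.Connected) (f : G ≃g G) (x y : V) :
    G.dist (f x) (f y) ≤ G.dist x y := by
  obtain ⟨p, hp⟩ := (hc x y).exists_walk_length_eq_dist
  calc G.dist (f x) (f y) ≤ (p.map f.toHom).length := SimpleGraph.dist_le _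
    _ = G.dist x y := by rw [SimpleGraph.Walk.length_map, hp]

lemma iso_dist (hc : G.Connected) (f : G ≃g G) (x y : V) :
    G.dist (f x) (f y) = G.dist x y := by
  refine le_antisymm (iso_dist_le hc f x y) ?_
  have := iso_dist_le hc f.symm (f x) (f y)
  simpa using this

lemma mem_seg {x y m : V} : m ∈ seg G x y ↔ G.dist x m + G.dist m y = G.dist x y :=
  Iff.rfl

lemma path_length (hT : G.IsTree) {x y : V} (p : G.Walk x y) (hp : p.IsPath) :
    p.length = G.dist x y := by
  obtain ⟨q, hq, hql⟩ := hT.isConnected.exists_path_of_dist x y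
  rw [(hT.existsUnique_path x y).unique hp hq, hql]

lemma seg_of_mem_support (hT : G.IsTree) {x y m : V} (p : G.Walk x y) (hp : p.IsPath)
    (hm : m ∈ p.support) : m ∈ seg G x y := by
  classical
  have h1 : (p.takeUntil m hm).length = G.dist x m :=
    path_length hT _ (hp.takeUntil hm)
  have h2 : (p.dropUntil m hm).length = G.dist m y :=
    path_length hT _ (hp.dropUntil hm)
  have h3 : (p.takeUntil m hm).length + (p.dropUntil m hm).length = p.length := by
    rw [← SimpleGraph.Walk.length_append, SimpleGraph.Walk.take_spec]
  have h4 : p.length = G.dist x y := path_length hT p hp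
  simp only [seg, Set.mem_setOf_eq]
  omega

lemma mem_support_of_seg (hT : G.IsTree) {x y m : V} (p : G.Walk x y) (hp : p.IsPath)
    (hm : m ∈ seg G x y) : m ∈ p.support := by
  obtain ⟨q₁, hq₁, hl₁⟩ := hT.isConnected.exists_path_of_dist x m
  obtain ⟨q₂, hq₂, hl₂⟩ := hT.isConnected.exists_path_of_dist m y
  have hlen : (q₁.append q₂).length = G.dist x y := by
    rw [SimpleGraph.Walk.length_append, hl₁, hl₂]; exact hm
  have hpath : (q₁.append q₂).IsPath := SimpleGraph.Walk.isPath_of_length_eq_dist _ hlen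
  have : q₁.append q₂ = p := (hT.existsUnique_path x y).unique hpath hp
  rw [← this]
  simp [SimpleGraph.Walk.mem_support_append_iff]

lemma tdist_eq_zero (hT : G.IsTree) {x y : V} (h : G.dist x y = 0) : x = y :=
  (hT.isConnected.dist_eq_zero_iff).mp h

lemma seg_order (hT : G.IsTree) {x y m n : V} (hm : m ∈ seg G x y) (hn : n ∈ seg G x y)
    (hle : G.dist x m ≤ G.dist x n) : m ∈ seg G x n ∧ n ∈ seg G m y := by
  classical
  obtain ⟨p, hp, _⟩ := hT.isConnected.exists_path_of_dist x y
  have hms : m ∈ p.support := mem_support_of_seg hT p hp hm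
  have hns : n ∈ p.support := mem_support_of_seg hT p hp hn
  rw [← SimpleGraph.Walk.take_spec p hms] at hns
  rw [SimpleGraph.Walk.mem_support_append_iff] at hns
  rcases hns with hns | hns
  · -- n on the first part: then n = m
    have h1 : n ∈ seg G x m := seg_of_mem_support hT _ (hp.takeUntil hms) hns
    rw [mem_seg] at h1 hm hn ⊢
    have h2 : G.dist m y ≤ G.dist m n + G.dist n y := hT.isConnected.dist_triangle
    have h3 : G.dist n m = G.dist m n := SimpleGraph.dist_comm
    exact ⟨by omega, by rw [mem_seg]; omega⟩
  · have h1 : n ∈ seg G m y := seg_of_mem_support hT _ (hp.dropUntil hms) hns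
    refine ⟨?_, h1⟩
    rw [mem_seg] at h1 hm hn ⊢
    omega

lemma seg_left (hT : G.IsTree) (x y : V) : x ∈ seg G x y := by
  rw [mem_seg, SimpleGraph.dist_self]; omega
lemma seg_right (hT : G.IsTree) (x y : V) : y ∈ seg G x y := by
  rw [mem_seg, SimpleGraph.dist_self]; omega

lemma seg_symm {x y m : V} (h : m ∈ seg G x y) : m ∈ seg G y x := by
  rw [mem_seg] at h ⊢
  rw [SimpleGraph.dist_comm (u := y) (v := m), SimpleGraph.dist_comm (u := m) (v := x),
    SimpleGraph.dist_comm (u := y) (v := x)]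
  omega

lemma subseg (hT : G.IsTree) {x y m n u : V} (hm : m ∈ seg G x y) (hn : n ∈ seg G x y)
    (hu : u ∈ seg G m n) : u ∈ seg G x y := by
  rcases le_total (G.dist x m) (G.dist x n) with hle | hle
  · obtain ⟨h1, h2⟩ := seg_order hT hm hn hle
    rw [mem_seg] at *
    have t1 : G.dist x u ≤ G.dist x m + G.dist m u := hT.isConnected.dist_triangle
    have t2 : G.dist u y ≤ G.dist u n + G.dist n y := hT.isConnected.dist_triangle
    have t3 : G.dist x y ≤ G.dist x u + G.dist u y := hT.isConnected.dist_triangle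
    have c1 : G.dist u n = G.dist n u := SimpleGraph.dist_comm
    have c2 : G.dist n y = G.dist y n := SimpleGraph.dist_comm
    omega
  · obtain ⟨h1, h2⟩ := seg_order hT hn hm hle
    have hu' : u ∈ seg G n m := seg_symm hu
    rw [mem_seg] at *
    have t1 : G.dist x u ≤ G.dist x n + G.dist n u := hT.isConnected.dist_triangle
    have t2 : G.dist u y ≤ G.dist u m + G.dist m y := hT.isConnected.dist_triangle
    have t3 : G.dist x y ≤ G.dist x u + G.dist u y := hT.isConnected.dist_triangle
    have c1 : G.dist u m = G.dist m u := SimpleGraph.dist_comm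
    omega

lemma median_aux (hT : G.IsTree) (n : ℕ) : ∀ x y z : V, G.dist x y = n →
    ∃ m, G.dist x m + G.dist m y = G.dist x y ∧ G.dist x m + G.dist m z = G.dist x z ∧
      G.dist y m + G.dist m z = G.dist y z := by
  induction n with
  | zero =>
    intro x y z h
    have hxy := tdist_eq_zero hT h
    subst hxy
    exact ⟨x, by simp [SimpleGraph.dist_self], by simp [SimpleGraph.dist_self],
      by simp [SimpleGraph.dist_self]⟩
  | succ n ih =>
    intro x y z hxy
    obtain ⟨p, hp, hpl⟩ := hT.isConnected.exists_path_of_dist x y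
    cases p with
    | nil => rw [SimpleGraph.dist_self] at hxy; omega
    | @cons _ a _ hadj q =>
      have hqp : q.IsPath := hp.of_cons
      have hay : G.dist a y = n := by
        have := path_length hT q hqp
        rw [SimpleGraph.Walk.length_cons] at hpl
        omega
      have hxa : G.dist x a = 1 := (SimpleGraph.dist_eq_one_iff_adj).mpr hadj
      by_cases hxz : G.dist x z = 0
      · have := tdist_eq_zero hT hxz
        subst this
        exact ⟨x, by simp [SimpleGraph.dist_self], by simp [SimpleGraph.dist_self],
          by simp [SimpleGraph.dist_self]⟩
      · obtain ⟨r, hr, hrl⟩ := hT.isConnected.exists_path_of_dist x z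
        cases r with
        | nil => rw [SimpleGraph.dist_self] at hxz; omega
        | @cons _ b _ hadj' r' =>
          have hrp : r'.IsPath := hr.of_cons
          have hbz : G.dist b z + 1 = G.dist x z := by
            have := path_length hT r' hrp
            rw [SimpleGraph.Walk.length_cons] at hrl
            omega
          by_cases hab : a = b
          · subst hab
            obtain ⟨m, e1, e2, e3⟩ := ih a y z hay
            have t1 : G.dist x y ≤ G.dist x m + G.dist m y := hT.isConnected.dist_triangle
            have t2 : G.dist x m ≤ G.dist x a + G.dist a m := hT.isConnected.dist_triangle
            have t3 : G.dist x z ≤ G.dist x m + G.dist m z := hT.isConnected.dist_triangle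
            exact ⟨m, by omega, by omega, e3⟩
          · -- the two geodesics split at x; x is the median
            set p : G.Walk x y := SimpleGraph.Walk.cons hadj q with hpdef
            set r : G.Walk x z := SimpleGraph.Walk.cons hadj' r' with hrdef
            have hxr' : x ∉ r'.support := ((SimpleGraph.Walk.cons_isPath_iff _ _).mp hr).2
            have hdisj : p.support.reverse.Disjoint r'.support := by
              intro w hw1 hw2
              have hw1' : w ∈ p.support := List.mem_reverse.mp hw1
              have hwx : w ≠ x := fun h => hxr' (h ▸ hw2)
              have hwseg1 : w ∈ seg G x y := seg_of_mem_support hT p hp hw1'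
              have hwr : w ∈ r.support := by
                rw [hrdef, SimpleGraph.Walk.support_cons]
                exact List.mem_cons_of_mem _ hw2
              have hwseg2 : w ∈ seg G x z := seg_of_mem_support hT r hr hwr
              have haseg : a ∈ seg G x y := by
                refine seg_of_mem_support hT p hp ?_
                rw [hpdef, SimpleGraph.Walk.support_cons]
                exact List.mem_cons_of_mem _ q.start_mem_support
              have hbseg : b ∈ seg G x z := by
                refine seg_of_mem_support hT r hr ?_
                rw [hrdef, SimpleGraph.Walk.support_cons]
                exact List.mem_cons_of_mem _ r'.start_mem_support
              have hxb : G.dist x b = 1 := (SimpleGraph.dist_eq_one_iff_adj).mpr hadj'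
              have hxw : 1 ≤ G.dist x w := by
                rcases Nat.eq_zero_or_pos (G.dist x w) with h | h
                · exact absurd (tdist_eq_zero hT h).symm hwx
                · omega
              have h1 : a ∈ seg G x w := (seg_order hT haseg hwseg1 (by omega)).1
              have h2 : b ∈ seg G x w := (seg_order hT hbseg hwseg2 (by omega)).1
              have h3 : a ∈ seg G x b := (seg_order hT h1 h2 (by omega)).1
              rw [mem_seg] at h3
              exact hab (tdist_eq_zero hT (by omega))
            have hsup : r.support.tail = r'.support := by
              rw [hrdef, SimpleGraph.Walk.support_cons, List.tail_cons]
            have hW : (p.reverse.append r).IsPath := by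
              rw [SimpleGraph.Walk.isPath_def, SimpleGraph.Walk.support_append,
                SimpleGraph.Walk.support_reverse, hsup]
              exact List.Nodup.append (List.nodup_reverse.mpr hp.support_nodup)
                hrp.support_nodup hdisj
            have hWl : (p.reverse.append r).length = G.dist y z := path_length hT _ hW
            rw [SimpleGraph.Walk.length_append, SimpleGraph.Walk.length_reverse] at hWl
            have hpl' : p.length = G.dist x y := path_length hT p hp
            have hrl' : r.length = G.dist x z := path_length hT r hr
            have hcomm : G.dist y x = G.dist x y := SimpleGraph.dist_comm
            exact ⟨x, by simp [SimpleGraph.dist_self], by simp [SimpleGraph.dist_self],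
              by omega⟩

lemma median (hT : G.IsTree) (x y z : V) :
    ∃ m, G.dist x m + G.dist m y = G.dist x y ∧ G.dist x m + G.dist m z = G.dist x z ∧
      G.dist y m + G.dist m z = G.dist y z :=
  median_aux hT (G.dist x y) x y z rfl

lemma gate_attach (hT : G.IsTree) {x y w n u : V}
    (f1 : G.dist x n + G.dist n y = G.dist x y)
    (f2 : G.dist x n + G.dist n w = G.dist x w)
    (f3 : G.dist y n + G.dist n w = G.dist y w)
    (hu : u ∈ seg G x y) : G.dist w u = G.dist w n + G.dist n u := by
  have hnseg : n ∈ seg G x y := mem_seg.mpr f1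
  have hu' := mem_seg.mp hu
  have c1 : G.dist w u = G.dist u w := SimpleGraph.dist_comm
  have c2 : G.dist w n = G.dist n w := SimpleGraph.dist_comm
  have c3 : G.dist n u = G.dist u n := SimpleGraph.dist_comm
  have t2 : G.dist u w ≤ G.dist u n + G.dist n w := hT.isConnected.dist_triangle
  rcases le_total (G.dist x u) (G.dist x n) with hle | hle
  · have h1 := mem_seg.mp (seg_order hT hu hnseg hle).1
    have t1 : G.dist x w ≤ G.dist x u + G.dist u w := hT.isConnected.dist_triangle
    omega
  · have h1 := mem_seg.mp (seg_order hT hnseg hu hle).2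
    have t1 : G.dist y w ≤ G.dist y u + G.dist u w := hT.isConnected.dist_triangle
    have c4 : G.dist y u = G.dist u y := SimpleGraph.dist_comm
    have c5 : G.dist y n = G.dist n y := SimpleGraph.dist_comm
    omega

lemma fp (hT : G.IsTree) (x y z w : V) :
    G.dist x z + G.dist y w ≤ max (G.dist x y + G.dist z w) (G.dist x w + G.dist y z) := by
  obtain ⟨m, e1, e2, e3⟩ := median hT x y z
  obtain ⟨n, f1, f2, f3⟩ := median hT x y w
  rcases le_or_gt (G.dist x m) (G.dist x n) with hle | hlt
  · refine le_max_of_le_right ?_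
    have c1 : G.dist y m = G.dist m y := SimpleGraph.dist_comm
    have c2 : G.dist y n = G.dist n y := SimpleGraph.dist_comm
    omega
  · have msegxy : m ∈ seg G x y := mem_seg.mpr e1
    have nsegxy : n ∈ seg G x y := mem_seg.mpr f1
    have horder := seg_order hT nsegxy msegxy hlt.le
    have hnxm := mem_seg.mp horder.1
    have hwm : G.dist w m = G.dist w n + G.dist n m := gate_attach hT f1 f2 f3 msegxy
    have claim : G.dist z m + G.dist m w = G.dist z w := by
      obtain ⟨κ, a1, a2, a3⟩ := median hT z w m
      have hκm0 : G.dist κ m = 0 := by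
        have κsegmw : κ ∈ seg G m w := by
          rw [mem_seg]
          have c1 : G.dist m κ = G.dist κ m := SimpleGraph.dist_comm
          have c2 : G.dist w κ = G.dist κ w := SimpleGraph.dist_comm
          have c3 : G.dist w m = G.dist m w := SimpleGraph.dist_comm
          omega
        have nsegmw : n ∈ seg G m w := by
          rw [mem_seg]
          have c1 : G.dist m n = G.dist n m := SimpleGraph.dist_comm
          have c2 : G.dist w m = G.dist m w := SimpleGraph.dist_comm
          have c3 : G.dist w n = G.dist n w := SimpleGraph.dist_comm
          omega
        rcases le_total (G.dist m κ) (G.dist m n) with h | h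
        · have hκseg : κ ∈ seg G m n := (seg_order hT κsegmw nsegmw h).1
          have hκxy : κ ∈ seg G x y := subseg hT msegxy nsegxy hκseg
          have := gate_attach hT e1 e2 e3 hκxy
          have c1 : G.dist z κ = G.dist κ z := SimpleGraph.dist_comm
          have c2 : G.dist z m = G.dist m z := SimpleGraph.dist_comm
          have c3 : G.dist m κ = G.dist κ m := SimpleGraph.dist_comm
          omega
        · have h2 := seg_order hT nsegmw κsegmw h
          have hn : G.dist m n + G.dist n κ = G.dist m κ := mem_seg.mp h2.1
          have t : G.dist z n ≤ G.dist z κ + G.dist κ n := hT.isConnected.dist_triangle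
          have hzn : G.dist z n = G.dist z m + G.dist m n := by
            have := gate_attach hT e1 e2 e3 nsegxy
            have c1 : G.dist z n = G.dist n z := SimpleGraph.dist_comm
            have c2 : G.dist z m = G.dist m z := SimpleGraph.dist_comm
            have c3 : G.dist m n = G.dist n m := SimpleGraph.dist_comm
            omega
          have hmn0 : G.dist m n = 0 := by
            have c1 : G.dist κ n = G.dist n κ := SimpleGraph.dist_comm
            have c2 : G.dist m κ = G.dist κ m := SimpleGraph.dist_comm
            omega
          have : m = n := tdist_eq_zero hT hmn0
          subst this
          omega
      have c1 : G.dist z κ = G.dist κ z := SimpleGraph.dist_comm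
      have c2 : G.dist w κ = G.dist κ w := SimpleGraph.dist_comm
      have c3 : G.dist m w = G.dist w m := SimpleGraph.dist_comm
      omega
    refine le_max_of_le_left ?_
    have c1 : G.dist z m = G.dist m z := SimpleGraph.dist_comm
    have c2 : G.dist n m = G.dist m n := SimpleGraph.dist_comm
    have c3 : G.dist w n = G.dist n w := SimpleGraph.dist_comm
    have c4 : G.dist m w = G.dist w m := SimpleGraph.dist_comm
    have c5 : G.dist y n = G.dist n y := SimpleGraph.dist_comm
    have c6 : G.dist y m = G.dist m y := SimpleGraph.dist_comm
    omega

lemma gate_exists (hT : G.IsTree) {C : Set V} (hne : C.Nonempty) (hconv : SegClosed G C)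
    (x : V) : ∃ c₀, IsGate G x c₀ C := by
  have himg : (G.dist x '' C).Nonempty := hne.image _
  obtain ⟨c₀, hc₀, hmin⟩ := Nat.sInf_mem himg
  refine ⟨c₀, hc₀, fun c hc => ?_⟩
  have hminle : ∀ c' ∈ C, G.dist x c₀ ≤ G.dist x c' := by
    intro c' hc'
    rw [hmin]
    exact Nat.sInf_le ⟨c', hc', rfl⟩
  obtain ⟨m, e1, e2, e3⟩ := median hT x c₀ c
  have hmC : m ∈ C := hconv c₀ hc₀ c hc m (mem_seg.mpr e3)
  have := hminle m hmC
  have c1 : G.dist m c₀ = G.dist c₀ m := SimpleGraph.dist_comm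
  omega

lemma gate_unique (hT : G.IsTree) {C : Set V} {x a b : V} (ha : IsGate G x a C)
    (hb : IsGate G x b C) : a = b := by
  have h1 := ha.2 b hb.1
  have h2 := hb.2 a ha.1
  have c1 : G.dist a b = G.dist b a := SimpleGraph.dist_comm
  exact tdist_eq_zero hT (by omega)

lemma gate_sep (hT : G.IsTree) {C : Set V} {x y a b : V} (hga : IsGate G x a C)
    (hgb : IsGate G y b C) (hab : a ≠ b) :
    G.dist x y = G.dist x a + G.dist a b + G.dist b y := by
  have hub : G.dist x y ≤ G.dist x a + G.dist a b + G.dist b y := by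
    have t1 : G.dist x y ≤ G.dist x a + G.dist a y := hT.isConnected.dist_triangle
    have t2 : G.dist a y ≤ G.dist a b + G.dist b y := hT.isConnected.dist_triangle
    omega
  have h := fp hT x a b y
  have h1 : G.dist x b = G.dist x a + G.dist a b := hga.2 b hgb.1
  have h2 : G.dist y a = G.dist y b + G.dist b a := hgb.2 a hga.1
  have hab0 : G.dist a b ≠ 0 := fun h0 => hab (tdist_eq_zero hT h0)
  have c1 : G.dist a y = G.dist y a := SimpleGraph.dist_comm
  have c2 : G.dist b a = G.dist a b := SimpleGraph.dist_comm
  have c3 : G.dist b y = G.dist y b := SimpleGraph.dist_comm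
  rcases le_max_iff.mp h with h' | h' <;> omega

lemma iso_mul_apply (g h : G ≃g G) (x : V) : (g * h) x = g (h x) := rfl
lemma iso_inv_apply (g : G ≃g G) (x : V) : (g⁻¹ : G ≃g G) x = g.symm x := rfl
lemma iso_apply_inv (g : G ≃g G) (x : V) : g ((g⁻¹ : G ≃g G) x) = x := g.apply_symm_apply x
lemma iso_inv_apply' (g : G ≃g G) (x : V) : (g⁻¹ : G ≃g G) (g x) = x := g.symm_apply_apply x

lemma ell_le (g : G ≃g G) (x : V) : ell G g ≤ G.dist x (g x) := Nat.sInf_le ⟨x, rfl⟩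

lemma mem_axis {g : G ≃g G} {x : V} : x ∈ axisSet G g ↔ G.dist x (g x) = ell G g := Iff.rfl

lemma axis_nonempty (hT : G.IsTree) (g : G ≃g G) : (axisSet G g).Nonempty := by
  have : Nonempty V := hT.isConnected.nonempty
  obtain ⟨x, hx⟩ := Nat.sInf_mem (Set.range_nonempty fun x => G.dist x (g x))
  exact ⟨x, hx⟩

lemma axis_apply (hT : G.IsTree) {g : G ≃g G} {x : V} (hx : x ∈ axisSet G g) :
    g x ∈ axisSet G g := by
  rw [mem_axis] at hx ⊢
  rw [iso_dist hT.isConnected g x (g x)]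
  exact hx

lemma tdist_inv (hT : G.IsTree) (g : G ≃g G) (x y : V) :
    G.dist ((g⁻¹ : G ≃g G) x) y = G.dist x (g y) := by
  have h := iso_dist hT.isConnected g ((g⁻¹ : G ≃g G) x) y
  rw [iso_apply_inv] at h
  exact h.symm

lemma axis_inv_apply (hT : G.IsTree) {g : G ≃g G} {x : V} (hx : x ∈ axisSet G g) :
    (g⁻¹ : G ≃g G) x ∈ axisSet G g := by
  rw [mem_axis] at hx ⊢
  rw [iso_apply_inv, tdist_inv hT g]
  exact hx

lemma disp_inv (hT : G.IsTree) (g : G ≃g G) (x : V) :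
    G.dist x ((g⁻¹ : G ≃g G) x) = G.dist x (g x) := by
  rw [SimpleGraph.dist_comm, tdist_inv hT g, SimpleGraph.dist_comm]

lemma ell_inv (hT : G.IsTree) (g : G ≃g G) : ell G g⁻¹ = ell G g := by
  have h : (fun x => G.dist x ((g⁻¹ : G ≃g G) x)) = (fun x => G.dist x (g x)) :=
    funext fun x => disp_inv hT g x
  unfold ell
  rw [h]

lemma axis_inv_set (hT : G.IsTree) (g : G ≃g G) : axisSet G g⁻¹ = axisSet G g := by
  unfold axisSet
  ext x
  rw [Set.mem_setOf_eq, Set.mem_setOf_eq, ell_inv hT g, disp_inv hT g]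

lemma axis_convex (hT : G.IsTree) (g : G ≃g G) : SegClosed G (axisSet G g) := by
  intro x hx y hy m hm
  rw [mem_axis] at hx hy ⊢
  have hm' := mem_seg.mp hm
  have h := fp hT m (g x) (g m) (g y)
  rw [iso_dist hT.isConnected g x y, iso_dist hT.isConnected g m y] at h
  have t1 : G.dist m (g x) ≤ G.dist m x + G.dist x (g x) := hT.isConnected.dist_triangle
  have t2 : G.dist m (g y) ≤ G.dist m y + G.dist y (g y) := hT.isConnected.dist_triangle
  have hgm : G.dist (g m) (g x) = G.dist m x := iso_dist hT.isConnected g m x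
  have hgm2 : G.dist (g x) (g m) = G.dist x m := iso_dist hT.isConnected g x m
  have c1 : G.dist m x = G.dist x m := SimpleGraph.dist_comm
  have hle := ell_le g m
  have : G.dist m (g m) = ell G g := by omega
  exact this

lemma seg_map (hT : G.IsTree) (f : G ≃g G) {x y m : V} (hm : m ∈ seg G x y) :
    f m ∈ seg G (f x) (f y) := by
  rw [mem_seg] at hm ⊢
  rw [iso_dist hT.isConnected, iso_dist hT.isConnected, iso_dist hT.isConnected]
  exact hm

lemma gate_map (hT : G.IsTree) (f : G ≃g G) {x c₀ : V} {C : Set V}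
    (h : IsGate G x c₀ C) : IsGate G (f x) (f c₀) ((f : V → V) '' C) := by
  refine ⟨⟨c₀, h.1, rfl⟩, ?_⟩
  rintro c ⟨c', hc', rfl⟩
  rw [iso_dist hT.isConnected, iso_dist hT.isConnected, iso_dist hT.isConnected]
  exact h.2 c' hc'

lemma axis_image_self (hT : G.IsTree) (g f : G ≃g G)
    (hf : ∀ x ∈ axisSet G g, f x ∈ axisSet G g)
    (hf' : ∀ x ∈ axisSet G g, (f⁻¹ : G ≃g G) x ∈ axisSet G g) :
    (f : V → V) '' axisSet G g = axisSet G g := by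
  ext x
  constructor
  · rintro ⟨a, ha, rfl⟩; exact hf a ha
  · intro hx
    exact ⟨(f⁻¹ : G ≃g G) x, hf' x hx, iso_apply_inv f x⟩

/-- The displacement formula: `d(x, wx) = ℓ(w) + 2 d(x, Axis(w))`. -/
lemma disp (hT : G.IsTree) (w : G ≃g G) {x a : V} (hg : IsGate G x a (axisSet G w)) :
    G.dist x (w x) = ell G w + 2 * G.dist x a := by
  have haxis : a ∈ axisSet G w := hg.1
  have hda : G.dist a (w a) = ell G w := haxis
  by_cases hl : ell G w = 0
  · -- a is fixed by w
    have hwa : w a = a := tdist_eq_zero hT (by rw [hda, hl]) |>.symm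
    obtain ⟨m, e1, e2, e3⟩ := median hT x (w x) a
    have hdxa : G.dist (w x) a = G.dist x a := by
      conv_lhs => rw [← hwa]
      rw [iso_dist hT.isConnected]
    -- m and w m are both on seg (w x) a at the same distance, so they coincide
    have hmseg : m ∈ seg G x a := mem_seg.mpr e2
    have hwm : w m ∈ seg G (w x) a := by
      have := seg_map hT w hmseg
      rwa [hwa] at this
    have hmseg2 : m ∈ seg G (w x) a := by
      rw [mem_seg]
      have c1 : G.dist (w x) m = G.dist m (w x) := SimpleGraph.dist_comm
      omega
    have hdist_eq : G.dist (w x) m = G.dist (w x) (w m) := by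
      rw [iso_dist hT.isConnected]
      have h1 := mem_seg.mp hmseg2
      have c1 : G.dist (w x) m = G.dist m (w x) := SimpleGraph.dist_comm
      omega
    have hmwm : G.dist m (w m) = 0 := by
      have h1 := (seg_order hT hmseg2 hwm (le_of_eq hdist_eq)).1
      rw [mem_seg] at h1
      omega
    have hmax : m ∈ axisSet G w := by
      rw [mem_axis, hmwm, hl]
    have := hg.2 m hmax
    have c1 : G.dist m a = G.dist a m := SimpleGraph.dist_comm
    have ham : G.dist a m = 0 := by omega
    have : a = m := tdist_eq_zero hT ham
    subst this
    -- now a ∈ seg x (w x)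
    have c2 : G.dist a (w x) = G.dist x a := by
      rw [SimpleGraph.dist_comm]; exact hdxa
    omega
  · -- gate of w x is w a, distinct from a
    have hga' : IsGate G (w x) (w a) (axisSet G w) := by
      have := gate_map hT w hg
      rwa [axis_image_self hT w w (fun z hz => axis_apply hT hz)
        (fun z hz => axis_inv_apply hT hz)] at this
    have hne : a ≠ w a := by
      intro h
      rw [← h] at hda
      rw [SimpleGraph.dist_self] at hda
      omega
    have := gate_sep hT hg hga' hne
    have h2 : G.dist (w a) (w x) = G.dist a x := iso_dist hT.isConnected w a x
    have c1 : G.dist a x = G.dist x a := SimpleGraph.dist_comm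
    omega

lemma bridge (hT : G.IsTree) {C D : Set V} (hcC : SegClosed G C) (hcD : SegClosed G D)
    (hdisj : C ∩ D = ∅) {u₁ u₂ : V} (hu₁ : u₁ ∈ C) (hu₂ : u₂ ∈ D)
    (hmin : ∀ c ∈ C, ∀ b ∈ D, G.dist u₁ u₂ ≤ G.dist c b) :
    ∀ c ∈ C, ∀ b ∈ D, G.dist c b = G.dist c u₁ + G.dist u₁ u₂ + G.dist u₂ b := by
  have claim1 : ∀ c ∈ C, G.dist u₂ c = G.dist u₁ u₂ + G.dist u₁ c := by
    intro c hc
    obtain ⟨m, e1, e2, e3⟩ := median hT c u₂ u₁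
    have hmC : m ∈ C := hcC c hc u₁ hu₁ m (mem_seg.mpr e2)
    have h := hmin m hmC u₂ hu₂
    have c1 : G.dist m u₂ = G.dist u₂ m := SimpleGraph.dist_comm
    have c2 : G.dist u₂ c = G.dist c u₂ := SimpleGraph.dist_comm
    have c3 : G.dist u₁ c = G.dist c u₁ := SimpleGraph.dist_comm
    have c4 : G.dist u₁ u₂ = G.dist u₂ u₁ := SimpleGraph.dist_comm
    omega
  have claim2 : ∀ b ∈ D, G.dist u₁ b = G.dist u₁ u₂ + G.dist u₂ b := by
    intro b hb
    obtain ⟨m, e1, e2, e3⟩ := median hT b u₁ u₂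
    have hmD : m ∈ D := hcD b hb u₂ hu₂ m (mem_seg.mpr e2)
    have h := hmin u₁ hu₁ m hmD
    have c1 : G.dist m u₁ = G.dist u₁ m := SimpleGraph.dist_comm
    have c2 : G.dist u₁ b = G.dist b u₁ := SimpleGraph.dist_comm
    have c3 : G.dist u₂ b = G.dist b u₂ := SimpleGraph.dist_comm
    omega
  intro c hc b hb
  obtain ⟨μ, e1, e2, e3⟩ := median hT c b u₁
  have hμC : μ ∈ C := hcC c hc u₁ hu₁ μ (mem_seg.mpr e2)
  have hμseg : μ ∈ seg G u₁ b := by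
    rw [mem_seg]
    have c1 : G.dist u₁ μ = G.dist μ u₁ := SimpleGraph.dist_comm
    have c2 : G.dist u₁ b = G.dist b u₁ := SimpleGraph.dist_comm
    have c3 : G.dist μ b = G.dist b μ := SimpleGraph.dist_comm
    omega
  have hu₂seg : u₂ ∈ seg G u₁ b := mem_seg.mpr (claim2 b hb).symm
  rcases le_total (G.dist u₁ μ) (G.dist u₁ u₂) with h | h
  · have hμ := mem_seg.mp (seg_order hT hμseg hu₂seg h).1
    have hm := hmin μ hμC u₂ hu₂
    have c1 : G.dist u₁ μ = G.dist μ u₁ := SimpleGraph.dist_comm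
    have hμ0 : G.dist u₁ μ = 0 := by omega
    have hμeq : u₁ = μ := tdist_eq_zero hT hμ0
    have h2 := claim2 b hb
    have c2 : G.dist μ b = G.dist u₁ b := by rw [← hμeq]
    omega
  · have h2 := mem_seg.mp (seg_order hT hu₂seg hμseg h).1
    have h3 := claim1 μ hμC
    have c1 : G.dist u₁ μ = G.dist μ u₁ := SimpleGraph.dist_comm
    have hΔ : G.dist u₁ u₂ = 0 := by omega
    have : u₁ = u₂ := tdist_eq_zero hT hΔ
    exfalso
    have hmem : u₁ ∈ C ∩ D := ⟨hu₁, this ▸ hu₂⟩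
    rw [hdisj] at hmem
    exact hmem

lemma prod_ell (hT : G.IsTree) (h₁ h₂ : G ≃g G) (hl₁ : 0 < ell G h₁) (hl₂ : 0 < ell G h₂)
    (hdisj : axisSet G h₁ ∩ axisSet G h₂ = ∅) {u₁ u₂ : V}
    (hu₁ : u₁ ∈ axisSet G h₁) (hu₂ : u₂ ∈ axisSet G h₂)
    (hmin : ∀ a ∈ axisSet G h₁, ∀ b ∈ axisSet G h₂, G.dist u₁ u₂ ≤ G.dist a b) :
    ell G (h₁ * h₂) = ell G h₁ + ell G h₂ + 2 * G.dist u₁ u₂ := by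
  set C := axisSet G h₁ with hC
  set D := axisSet G h₂ with hD
  set Δ := G.dist u₁ u₂ with hΔ
  set l₁ := ell G h₁
  set l₂ := ell G h₂
  have hc := hT.isConnected
  have BR := bridge hT (axis_convex hT h₁) (axis_convex hT h₂) hdisj hu₁ hu₂ hmin
  have du₁ : G.dist u₁ (h₁ u₁) = l₁ := hu₁
  have du₂ : G.dist u₂ (h₂ u₂) = l₂ := hu₂
  have gateb : ∀ b ∈ D, IsGate G b u₁ C := by
    intro b hb
    refine ⟨hu₁, fun c hcc => ?_⟩
    have h1 := BR c hcc b hb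
    have h2 := BR u₁ hu₁ b hb
    have c0 : G.dist u₁ u₁ = 0 := SimpleGraph.dist_self
    have c1 : G.dist b c = G.dist c b := SimpleGraph.dist_comm
    have c2 : G.dist b u₁ = G.dist u₁ b := SimpleGraph.dist_comm
    have c3 : G.dist u₁ c = G.dist c u₁ := SimpleGraph.dist_comm
    omega
  have gatec : ∀ c ∈ C, IsGate G c u₂ D := by
    intro c hcc
    refine ⟨hu₂, fun b hb => ?_⟩
    have h1 := BR c hcc b hb
    have h2 := BR c hcc u₂ hu₂
    have c0 : G.dist u₂ u₂ = 0 := SimpleGraph.dist_self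
    omega
  -- the point z = h₁⁻¹ u₂ and its gates
  set z := (h₁⁻¹ : G ≃g G) u₂ with hz
  have him₁ : ((h₁⁻¹ : G ≃g G) : V → V) '' C = C := by
    refine axis_image_self hT h₁ (h₁⁻¹) (fun x hx => axis_inv_apply hT hx) ?_
    intro x hx
    rw [inv_inv]
    exact axis_apply hT hx
  have him₂ : ((h₁ : G ≃g G) : V → V) '' C = C :=
    axis_image_self hT h₁ h₁ (fun x hx => axis_apply hT hx)
      (fun x hx => axis_inv_apply hT hx)
  have him₃ : ((h₂⁻¹ : G ≃g G) : V → V) '' D = D := by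
    refine axis_image_self hT h₂ (h₂⁻¹) (fun x hx => axis_inv_apply hT hx) ?_
    intro x hx
    rw [inv_inv]
    exact axis_apply hT hx
  have gz : IsGate G z ((h₁⁻¹ : G ≃g G) u₁) C := by
    have := gate_map hT (h₁⁻¹) (gateb u₂ hu₂)
    rwa [him₁] at this
  have dz : G.dist z ((h₁⁻¹ : G ≃g G) u₁) = Δ := by
    rw [hz, iso_dist hc (h₁⁻¹) u₂ u₁, SimpleGraph.dist_comm]
  have dl : G.dist ((h₁⁻¹ : G ≃g G) u₁) u₁ = l₁ := by
    rw [tdist_inv hT h₁ u₁ u₁]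
    exact du₁
  have hne : (h₁⁻¹ : G ≃g G) u₁ ≠ u₁ := by
    intro h
    rw [h, SimpleGraph.dist_self] at dl
    omega
  have hne₂ : h₁ u₁ ≠ u₁ := by
    intro h
    have : G.dist u₁ (h₁ u₁) = 0 := by rw [h, SimpleGraph.dist_self]
    omega
  have dl₂ : G.dist (h₁ u₁) u₁ = l₁ := by rw [SimpleGraph.dist_comm]; exact du₁
  -- value of d(u₁, h₂ u₂)
  have dval : G.dist u₁ (h₂ u₂) = Δ + l₂ := by
    have := (gatec u₁ hu₁).2 (h₂ u₂) (axis_apply hT hu₂)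
    omega
  -- E1 : displacement of u₂ under h₁ * h₂
  have hrw1 : G.dist u₂ ((h₁ * h₂) u₂) = G.dist z (h₂ u₂) := by
    rw [iso_mul_apply, hz, tdist_inv hT h₁ u₂ (h₂ u₂)]
  have E1 : G.dist u₂ ((h₁ * h₂) u₂) = 2 * Δ + l₁ + l₂ := by
    rw [hrw1, gate_sep hT gz (gateb (h₂ u₂) (axis_apply hT hu₂)) hne, dz, dl, dval]
    omega
  -- gate of z on D is u₂
  have gzD : IsGate G z u₂ D := by
    refine ⟨hu₂, fun b hb => ?_⟩
    have h1 := gate_sep hT gz (gateb b hb) hne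
    have h2 := gate_sep hT gz (gateb u₂ hu₂) hne
    have h3 := BR u₁ hu₁ b hb
    have h4 := BR u₁ hu₁ u₂ hu₂
    have c0 : G.dist u₁ u₁ = 0 := SimpleGraph.dist_self
    have c1 : G.dist u₂ u₂ = 0 := SimpleGraph.dist_self
    have c2 : G.dist u₁ b = G.dist u₁ u₁ + G.dist u₁ u₂ + G.dist u₂ b := h3
    omega
  have dzu₂ : G.dist z u₂ = 2 * Δ + l₁ := by
    have h2 := gate_sep hT gz (gateb u₂ hu₂) hne
    have h4 := BR u₁ hu₁ u₂ hu₂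
    have c0 : G.dist u₁ u₁ = 0 := SimpleGraph.dist_self
    have c1 : G.dist u₂ u₂ = 0 := SimpleGraph.dist_self
    omega
  -- the point z₂ = (h₁ h₂) u₂ and its gate on D
  set z₂ := h₁ (h₂ u₂) with hz₂
  have gz₂C : IsGate G z₂ (h₁ u₁) C := by
    have := gate_map hT h₁ (gateb (h₂ u₂) (axis_apply hT hu₂))
    rwa [him₂] at this
  have dz₂ : G.dist z₂ (h₁ u₁) = Δ + l₂ := by
    rw [hz₂, iso_dist hc h₁, SimpleGraph.dist_comm]
    exact dval
  have gz₂D : IsGate G z₂ u₂ D := by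
    refine ⟨hu₂, fun b hb => ?_⟩
    have h1 := gate_sep hT gz₂C (gateb b hb) hne₂
    have h2 := gate_sep hT gz₂C (gateb u₂ hu₂) hne₂
    have h3 := BR u₁ hu₁ b hb
    have h4 := BR u₁ hu₁ u₂ hu₂
    have c0 : G.dist u₁ u₁ = 0 := SimpleGraph.dist_self
    have c1 : G.dist u₂ u₂ = 0 := SimpleGraph.dist_self
    omega
  have dz₂u₂ : G.dist z₂ u₂ = 2 * Δ + l₁ + l₂ := by
    have h2 := gate_sep hT gz₂C (gateb u₂ hu₂) hne₂
    have h4 := BR u₁ hu₁ u₂ hu₂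
    have c0 : G.dist u₁ u₁ = 0 := SimpleGraph.dist_self
    have c1 : G.dist u₂ u₂ = 0 := SimpleGraph.dist_self
    omega
  -- the point z₁ = (h₁ h₂)⁻¹ u₂ and its gate on D
  set z₁ := (h₂⁻¹ : G ≃g G) z with hz₁
  have gz₁D : IsGate G z₁ ((h₂⁻¹ : G ≃g G) u₂) D := by
    have := gate_map hT (h₂⁻¹) gzD
    rwa [him₃] at this
  have dz₁ : G.dist z₁ ((h₂⁻¹ : G ≃g G) u₂) = 2 * Δ + l₁ := by
    rw [hz₁, iso_dist hc (h₂⁻¹)]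
    exact dzu₂
  have dinv₂ : G.dist ((h₂⁻¹ : G ≃g G) u₂) u₂ = l₂ := by
    rw [tdist_inv hT h₂ u₂ u₂]
    exact du₂
  have hne₃ : (h₂⁻¹ : G ≃g G) u₂ ≠ u₂ := by
    intro h
    rw [h, SimpleGraph.dist_self] at dinv₂
    omega
  have E2 : G.dist u₂ ((h₁ * h₂) ((h₁ * h₂) u₂)) = 2 * (2 * Δ + l₁ + l₂) := by
    have hw : ((h₁ * h₂)⁻¹ : G ≃g G) u₂ = z₁ := by
      rw [mul_inv_rev]
      rfl
    have h0 : G.dist (((h₁ * h₂)⁻¹ : G ≃g G) u₂) ((h₁ * h₂) u₂) =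
        G.dist u₂ ((h₁ * h₂) ((h₁ * h₂) u₂)) := tdist_inv hT (h₁ * h₂) u₂ ((h₁ * h₂) u₂)
    rw [← h0, hw]
    have hz₂' : (h₁ * h₂) u₂ = z₂ := iso_mul_apply h₁ h₂ u₂
    rw [hz₂']
    have := gate_sep hT gz₁D gz₂D hne₃
    have c1 : G.dist u₂ z₂ = G.dist z₂ u₂ := SimpleGraph.dist_comm
    omega
  -- the criterion: u₂ lies on the axis of h₁ * h₂
  set w := h₁ * h₂ with hw
  obtain ⟨a, ga⟩ := gate_exists hT (axis_nonempty hT w) (axis_convex hT w) u₂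
  have L1 := disp hT w ga
  have haxis : a ∈ axisSet G w := ga.1
  have hda : G.dist a (w a) = ell G w := haxis
  have hwa : w a ∈ axisSet G w := axis_apply hT haxis
  have hdwa : G.dist (w a) (w (w a)) = ell G w := hwa
  have hbound : G.dist u₂ (w (w u₂)) ≤
      G.dist u₂ a + G.dist a (w a) + G.dist (w a) (w (w a)) + G.dist (w (w a)) (w (w u₂)) := by
    have t1 : G.dist u₂ (w (w u₂)) ≤ G.dist u₂ a + G.dist a (w (w u₂)) := hc.dist_triangle
    have t2 : G.dist a (w (w u₂)) ≤ G.dist a (w a) + G.dist (w a) (w (w u₂)) := hc.dist_triangle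
    have t3 : G.dist (w a) (w (w u₂)) ≤ G.dist (w a) (w (w a)) + G.dist (w (w a)) (w (w u₂)) :=
      hc.dist_triangle
    omega
  have hlast : G.dist (w (w a)) (w (w u₂)) = G.dist u₂ a := by
    rw [iso_dist hc w, iso_dist hc w, SimpleGraph.dist_comm]
  rw [E2, hlast, hda, hdwa] at hbound
  rw [E1] at L1
  omega

/-- The geodesic from any point of `C₁` to any point of `C₂` crosses the bridge points
`p₁, p₂` on `C₃`. -/
lemma sep (hT : G.IsTree) {C₁ C₂ C₃ : Set V}
    (conv₁ : SegClosed G C₁) (conv₂ : SegClosed G C₂) (conv₃ : SegClosed G C₃)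
    (hd₁₃ : C₁ ∩ C₃ = ∅) (hd₂₃ : C₂ ∩ C₃ = ∅)
    {p₁ p₂ x₁ x₂ : V} (hp₁ : p₁ ∈ C₃) (hp₂ : p₂ ∈ C₃) (hx₁ : x₁ ∈ C₁) (hx₂ : x₂ ∈ C₂)
    (hmin₁ : ∀ c ∈ C₃, ∀ a ∈ C₁, G.dist p₁ x₁ ≤ G.dist c a)
    (hmin₂ : ∀ c ∈ C₃, ∀ b ∈ C₂, G.dist p₂ x₂ ≤ G.dist c b)
    (hk : 0 < G.dist p₁ p₂) :
    ∀ a ∈ C₁, ∀ b ∈ C₂,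
      G.dist p₁ x₁ + G.dist p₁ p₂ + G.dist p₂ x₂ ≤ G.dist a b := by
  have hd₃₁ : C₃ ∩ C₁ = ∅ := by rw [Set.inter_comm]; exact hd₁₃
  have hd₃₂ : C₃ ∩ C₂ = ∅ := by rw [Set.inter_comm]; exact hd₂₃
  have BR13 := bridge hT conv₃ conv₁ hd₃₁ hp₁ hx₁ hmin₁
  have BR23 := bridge hT conv₃ conv₂ hd₃₂ hp₂ hx₂ hmin₂
  intro a ha b hb
  set d₁ := G.dist p₁ x₁
  set d₂ := G.dist p₂ x₂
  set k := G.dist p₁ p₂ with hkdef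
  have dpa : G.dist p₁ a = d₁ + G.dist x₁ a := by
    have := BR13 p₁ hp₁ a ha
    have c0 : G.dist p₁ p₁ = 0 := SimpleGraph.dist_self
    omega
  have dpb : G.dist p₁ b = k + d₂ + G.dist x₂ b := by
    have := BR23 p₁ hp₁ b hb
    have c1 : G.dist p₁ p₂ = G.dist p₂ p₁ := SimpleGraph.dist_comm
    omega
  have dp₂b : G.dist p₂ b = d₂ + G.dist x₂ b := by
    have := BR23 p₂ hp₂ b hb
    have c0 : G.dist p₂ p₂ = 0 := SimpleGraph.dist_self
    omega
  have dx₁p₂ : G.dist p₂ x₁ = k + d₁ := by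
    have := BR13 p₂ hp₂ x₁ hx₁
    have c0 : G.dist x₁ x₁ = 0 := SimpleGraph.dist_self
    have c1 : G.dist p₁ p₂ = G.dist p₂ p₁ := SimpleGraph.dist_comm
    omega
  obtain ⟨μ, e1, e2, e3⟩ := median hT a b p₁
  have μsega : μ ∈ seg G p₁ a := by
    rw [mem_seg]
    have c1 : G.dist p₁ μ = G.dist μ p₁ := SimpleGraph.dist_comm
    have c2 : G.dist p₁ a = G.dist a p₁ := SimpleGraph.dist_comm
    have c3 : G.dist μ a = G.dist a μ := SimpleGraph.dist_comm
    omega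
  have x₁sega : x₁ ∈ seg G p₁ a := mem_seg.mpr dpa.symm
  have μsegb : μ ∈ seg G p₁ b := by
    rw [mem_seg]
    have c1 : G.dist p₁ μ = G.dist μ p₁ := SimpleGraph.dist_comm
    have c2 : G.dist p₁ b = G.dist b p₁ := SimpleGraph.dist_comm
    have c3 : G.dist μ b = G.dist b μ := SimpleGraph.dist_comm
    omega
  have p₂segb : p₂ ∈ seg G p₁ b := by
    rw [mem_seg]
    omega
  have hs0 : G.dist p₁ μ = 0 := by
    rcases le_total (G.dist p₁ μ) d₁ with hle | hle
    · have hseg := mem_seg.mp (seg_order hT μsega x₁sega hle).1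
      have t : G.dist p₂ x₁ ≤ G.dist p₂ μ + G.dist μ x₁ := hT.isConnected.dist_triangle
      rcases le_total (G.dist p₁ μ) k with hle2 | hle2
      · have hseg2 := mem_seg.mp (seg_order hT μsegb p₂segb hle2).1
        have c1 : G.dist μ p₂ = G.dist p₂ μ := SimpleGraph.dist_comm
        omega
      · have hseg2 := mem_seg.mp (seg_order hT p₂segb μsegb hle2).1
        omega
    · have horder := seg_order hT x₁sega μsega hle
      have hx₁μ := mem_seg.mp horder.1
      have hμC₁ : μ ∈ C₁ := conv₁ x₁ hx₁ a ha μ horder.2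
      have hbr := BR13 p₂ hp₂ μ hμC₁
      have c1 : G.dist p₁ p₂ = G.dist p₂ p₁ := SimpleGraph.dist_comm
      rcases le_total (G.dist p₁ μ) k with hle2 | hle2
      · have hseg2 := mem_seg.mp (seg_order hT μsegb p₂segb hle2).1
        have c2 : G.dist μ p₂ = G.dist p₂ μ := SimpleGraph.dist_comm
        omega
      · have hseg2 := mem_seg.mp (seg_order hT p₂segb μsegb hle2).1
        have c2 : G.dist μ p₂ = G.dist p₂ μ := SimpleGraph.dist_comm
        omega
  -- now μ = p₁ numerically, conclude
  have c1 : G.dist μ p₁ = G.dist p₁ μ := SimpleGraph.dist_comm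
  have c2 : G.dist μ b = G.dist p₁ b := by
    have := tdist_eq_zero hT hs0
    rw [← this]
  have c3 : G.dist a p₁ = G.dist p₁ a := SimpleGraph.dist_comm
  omega

theorem key (hT : G.IsTree) (g₁ g₂ g₃ : G ≃g G)
    (hyp₁ : 0 < ell G g₁) (hyp₂ : 0 < ell G g₂) (hyp₃ : 0 < ell G g₃)
    (hd₁₂ : axisSet G g₁ ∩ axisSet G g₂ = ∅)
    (hd₁₃ : axisSet G g₁ ∩ axisSet G g₃ = ∅)
    (hd₂₃ : axisSet G g₂ ∩ axisSet G g₃ = ∅)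
    (p₁ p₂ : V)
    (hp₁ : p₁ ∈ projOn G (axisSet G g₃) (axisSet G g₁))
    (hp₂ : p₂ ∈ projOn G (axisSet G g₃) (axisSet G g₂))
    (hdist : ell G g₃ ≤ G.dist p₁ p₂)
    (hdir : translatesToward G g₃ p₁ p₂) :
    (ell G (g₃ * g₁ * g₃⁻¹ * g₂) : ℤ) ≤ (ell G (g₁ * g₂) : ℤ) - 2 * (ell G g₃ : ℤ) := by
  have hc := hT.isConnected
  obtain ⟨hp₁m, hp₁v⟩ := hp₁
  obtain ⟨hp₂m, hp₂v⟩ := hp₂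
  -- closest points x₁ ∈ γ₁ to p₁, x₂ ∈ γ₂ to p₂
  have hne₁ : (G.dist p₁ '' axisSet G g₁).Nonempty := (axis_nonempty hT g₁).image _
  obtain ⟨x₁, hx₁m, hx₁v⟩ := Nat.sInf_mem hne₁
  have hne₂ : (G.dist p₂ '' axisSet G g₂).Nonempty := (axis_nonempty hT g₂).image _
  obtain ⟨x₂, hx₂m, hx₂v⟩ := Nat.sInf_mem hne₂
  have hmin₁ : ∀ c ∈ axisSet G g₃, ∀ a ∈ axisSet G g₁, G.dist p₁ x₁ ≤ G.dist c a := by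
    intro c hcm a ha
    have h1 : G.dist p₁ x₁ = setDist G (axisSet G g₃) (axisSet G g₁) := by
      rw [hx₁v]; exact hp₁v
    rw [h1]
    exact Nat.sInf_le (Set.mem_image2_of_mem hcm ha)
  have hmin₂ : ∀ c ∈ axisSet G g₃, ∀ b ∈ axisSet G g₂, G.dist p₂ x₂ ≤ G.dist c b := by
    intro c hcm b hb
    have h1 : G.dist p₂ x₂ = setDist G (axisSet G g₃) (axisSet G g₂) := by
      rw [hx₂v]; exact hp₂v
    rw [h1]
    exact Nat.sInf_le (Set.mem_image2_of_mem hcm hb)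
  -- pair realizing the distance between γ₁ and γ₂
  have hneU : (Set.image2 G.dist (axisSet G g₁) (axisSet G g₂)).Nonempty :=
    Set.Nonempty.image2 (axis_nonempty hT g₁) (axis_nonempty hT g₂)
  obtain ⟨u₁, hu₁m, u₂, hu₂m, huv⟩ := Set.mem_image2.mp (Nat.sInf_mem hneU)
  have hminU : ∀ a ∈ axisSet G g₁, ∀ b ∈ axisSet G g₂, G.dist u₁ u₂ ≤ G.dist a b := by
    intro a ha b hb
    rw [huv]
    exact Nat.sInf_le (Set.mem_image2_of_mem ha hb)
  -- lower bound for ℓ(g₁ g₂)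
  have lower := prod_ell hT g₁ g₂ hyp₁ hyp₂ hd₁₂ hu₁m hu₂m hminU
  have hk : 0 < G.dist p₁ p₂ := lt_of_lt_of_le hyp₃ hdist
  have hsep := sep hT (axis_convex hT g₁) (axis_convex hT g₂) (axis_convex hT g₃)
    hd₁₃ hd₂₃ hp₁m hp₂m hx₁m hx₂m hmin₁ hmin₂ hk u₁ hu₁m u₂ hu₂m
  -- the translated point
  have hdd : G.dist (g₃ p₁) p₂ + ell G g₃ = G.dist p₁ p₂ := by
    unfold translatesToward at hdir
    rw [abs_of_nonneg (by push_cast; omega : (0:ℤ) ≤ (G.dist p₁ p₂ : ℤ) - (ell G g₃ : ℤ))]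
      at hdir
    omega
  -- upper bound for ℓ(g₃ g₁ g₃⁻¹ g₂)
  set q := g₃ x₁ with hq
  have hx₂q : G.dist x₂ q ≤ G.dist p₂ x₂ + G.dist (g₃ p₁) p₂ + G.dist p₁ x₁ := by
    have t1 : G.dist x₂ q ≤ G.dist x₂ p₂ + G.dist p₂ q := hc.dist_triangle
    have t2 : G.dist p₂ q ≤ G.dist p₂ (g₃ p₁) + G.dist (g₃ p₁) q := hc.dist_triangle
    have e1 : G.dist (g₃ p₁) q = G.dist p₁ x₁ := iso_dist hc g₃ p₁ x₁
    have c1 : G.dist x₂ p₂ = G.dist p₂ x₂ := SimpleGraph.dist_comm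
    have c2 : G.dist p₂ (g₃ p₁) = G.dist (g₃ p₁) p₂ := SimpleGraph.dist_comm
    omega
  have hWx : (g₃ * g₁ * g₃⁻¹ * g₂) x₂ = g₃ (g₁ ((g₃⁻¹ : G ≃g G) (g₂ x₂))) := rfl
  have hup : ell G (g₃ * g₁ * g₃⁻¹ * g₂) ≤
      2 * G.dist x₂ q + ell G g₁ + ell G g₂ := by
    have h0 := ell_le (g₃ * g₁ * g₃⁻¹ * g₂) x₂
    rw [hWx] at h0
    have t1 : G.dist x₂ (g₃ (g₁ ((g₃⁻¹ : G ≃g G) (g₂ x₂)))) ≤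
        G.dist x₂ q + G.dist q (g₃ (g₁ x₁)) +
        G.dist (g₃ (g₁ x₁)) (g₃ (g₁ ((g₃⁻¹ : G ≃g G) (g₂ x₂)))) := by
      have a1 : G.dist x₂ (g₃ (g₁ ((g₃⁻¹ : G ≃g G) (g₂ x₂)))) ≤
          G.dist x₂ q + G.dist q (g₃ (g₁ ((g₃⁻¹ : G ≃g G) (g₂ x₂)))) := hc.dist_triangle
      have a2 : G.dist q (g₃ (g₁ ((g₃⁻¹ : G ≃g G) (g₂ x₂)))) ≤
          G.dist q (g₃ (g₁ x₁)) +
          G.dist (g₃ (g₁ x₁)) (g₃ (g₁ ((g₃⁻¹ : G ≃g G) (g₂ x₂)))) := hc.dist_triangle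
      omega
    have e1 : G.dist q (g₃ (g₁ x₁)) = ell G g₁ := by
      rw [hq, iso_dist hc g₃]
      exact hx₁m
    have e2 : G.dist (g₃ (g₁ x₁)) (g₃ (g₁ ((g₃⁻¹ : G ≃g G) (g₂ x₂)))) =
        G.dist q (g₂ x₂) := by
      rw [iso_dist hc g₃, iso_dist hc g₁, SimpleGraph.dist_comm, tdist_inv hT g₃, hq,
        SimpleGraph.dist_comm]
    have e3 : G.dist q (g₂ x₂) ≤ G.dist q x₂ + G.dist x₂ (g₂ x₂) := hc.dist_triangle
    have e4 : G.dist x₂ (g₂ x₂) = ell G g₂ := hx₂m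
    have c1 : G.dist q x₂ = G.dist x₂ q := SimpleGraph.dist_comm
    omega
  -- combine
  have final : ell G (g₃ * g₁ * g₃⁻¹ * g₂) + 2 * ell G g₃ ≤ ell G (g₁ * g₂) := by omega
  push_cast
  omega

/-- Three hyperbolic isometries with pairwise disjoint axes; the projections of the axes
of g₁ and g₂ onto the axis of g₃ are at distance at least l(g₃), with g₃ translating the
first towards the second. Then conjugating g₁ by g₃ shortens the relevant products. -/
theorem stmt17 (G : SimpleGraph V) (hT : G.IsTree) (g₁ g₂ g₃ : G ≃g G)
    (h₁ : noInv G g₁) (h₂ : noInv G g₂) (h₃ : noInv G g₃)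
    (hyp₁ : 0 < ell G g₁) (hyp₂ : 0 < ell G g₂) (hyp₃ : 0 < ell G g₃)
    (hd₁₂ : axisSet G g₁ ∩ axisSet G g₂ = ∅)
    (hd₁₃ : axisSet G g₁ ∩ axisSet G g₃ = ∅)
    (hd₂₃ : axisSet G g₂ ∩ axisSet G g₃ = ∅)
    (p₁ p₂ : V)
    (hp₁ : p₁ ∈ projOn G (axisSet G g₃) (axisSet G g₁))
    (hp₂ : p₂ ∈ projOn G (axisSet G g₃) (axisSet G g₂))
    (hdist : ell G g₃ ≤ G.dist p₁ p₂)
    (hdir : translatesToward G g₃ p₁ p₂) :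
    (ell G (g₃ * g₁ * g₃⁻¹ * g₂) : ℤ) ≤ (ell G (g₁ * g₂) : ℤ) - 2 * (ell G g₃ : ℤ) ∧
    (ell G (g₃ * g₁ * g₃⁻¹ * g₂⁻¹) : ℤ) ≤ (ell G (g₁ * g₂⁻¹) : ℤ) - 2 * (ell G g₃ : ℤ) := by
  constructor
  · exact key hT g₁ g₂ g₃ hyp₁ hyp₂ hyp₃ hd₁₂ hd₁₃ hd₂₃ p₁ p₂ hp₁ hp₂ hdist hdir
  · have hyp₂' : 0 < ell G g₂⁻¹ := by rw [ell_inv hT]; exact hyp₂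
    have hd₁₂' : axisSet G g₁ ∩ axisSet G g₂⁻¹ = ∅ := by rw [axis_inv_set hT]; exact hd₁₂
    have hd₂₃' : axisSet G g₂⁻¹ ∩ axisSet G g₃ = ∅ := by rw [axis_inv_set hT]; exact hd₂₃
    have hp₂' : p₂ ∈ projOn G (axisSet G g₃) (axisSet G g₂⁻¹) := by
      rw [axis_inv_set hT]; exact hp₂
    exact key hT g₁ g₂⁻¹ g₃ hyp₁ hyp₂' hyp₃ hd₁₂' hd₁₃ hd₂₃' p₁ p₂ hp₁ hp₂' hdist hdir
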